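/- For every integer n ≥ 1, the type A Narayana polynomials satisfy the recurrence N^A_n(t) = t · N^A_{n-1}(t) + Σ_{k=1}^{n-1} N^A_{k-1}(t) · N^A_{n-k}(t). -/

import Mathlib

open Finset

/-- Type A Narayana polynomial `N^A_n(t)`, with convention `N^A_0 = 1`. -/
noncomputable def NA (n : ℕ) (t : ℝ) : ℝ :=
  if n = 0 then 1 else
    ∑ k ∈ Finset.Icc 1 n, (1 / (k : ℝ)) * ((n - 1).choose (k - 1) : ℝ) * (n.choose (k - 1) : ℝ) * t ^ k

/-- Type B Narayana polynomial `N^B_n(t)`. -/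
noncomputable def NB (n : ℕ) (t : ℝ) : ℝ :=
  ∑ k ∈ Finset.range (n + 1), ((n.choose k : ℝ)) ^ 2 * t ^ k

/-- `Q_n(t) = ∑_{k=0}^n C(n,k) C(n+1,k) t^k`, the derivative of `N^A_{n+1}`. -/
noncomputable def Qp (n : ℕ) (t : ℝ) : ℝ :=
  ∑ k ∈ Finset.range (n + 1), ((n.choose k : ℝ)) * (((n + 1).choose k : ℝ)) * t ^ k

private lemma hockey (M p : ℕ) :
    ∑ a ∈ range (M + 1), (a + p).choose (2 * p) = (M + p + 1).choose (2 * p + 1) := by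
  induction M with
  | zero =>
    simp only [range_one, sum_singleton, Nat.zero_add]
    rcases p with _ | p
    · simp
    · rw [Nat.choose_eq_zero_of_lt (by omega), Nat.choose_eq_zero_of_lt (by omega)]
  | succ M ih =>
    rw [sum_range_succ, ih, show M + 1 + p + 1 = (M + p + 1) + 1 by omega,
      Nat.choose_succ_succ (M + p + 1) (2 * p), show M + 1 + p = M + p + 1 by omega,
      Nat.add_comm]

private lemma vand12 (M : ℕ) : ∀ p q : ℕ,
    (∑ a ∈ range (M + 1), (a + p).choose (2 * p) * ((M - a) + q).choose (2 * q)
      = (M + p + q + 1).choose (2 * p + 2 * q + 1)) ∧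
    (∑ a ∈ range (M + 1), (a + p).choose (2 * p) * ((M - a) + q).choose (2 * q + 1)
      = (M + p + q + 1).choose (2 * p + 2 * q + 2)) := by
  induction M with
  | zero =>
    intro p q
    constructor
    · simp only [range_one, sum_singleton, Nat.zero_add, Nat.zero_sub]
      rcases Nat.eq_zero_or_pos p with hp | hp
      · rcases Nat.eq_zero_or_pos q with hq | hq
        · subst hp; subst hq; simp
        · subst hp
          rw [show (q).choose (2 * q) = 0 from Nat.choose_eq_zero_of_lt (by omega),
            show (0 + q + 1).choose (2 * 0 + 2 * q + 1) = 0 from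
              Nat.choose_eq_zero_of_lt (by omega)]
          simp
      · rw [show (p).choose (2 * p) = 0 from Nat.choose_eq_zero_of_lt (by omega),
          show (p + q + 1).choose (2 * p + 2 * q + 1) = 0 from
            Nat.choose_eq_zero_of_lt (by omega)]
        simp
    · simp only [range_one, sum_singleton, Nat.zero_add, Nat.zero_sub]
      rw [show (q).choose (2 * q + 1) = 0 from Nat.choose_eq_zero_of_lt (by omega),
        show (p + q + 1).choose (2 * p + 2 * q + 2) = 0 from
          Nat.choose_eq_zero_of_lt (by omega)]
      simp
  | succ M ih =>
    intro p q
    have h2 : ∀ q' : ℕ,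
        ∑ a ∈ range (M + 1 + 1), (a + p).choose (2 * p) * ((M + 1 - a) + q').choose (2 * q' + 1)
          = (M + 1 + p + q' + 1).choose (2 * p + 2 * q' + 2) := by
      intro q'
      rw [sum_range_succ,
        show ((M + 1 - (M + 1)) + q').choose (2 * q' + 1) = 0 from
          Nat.choose_eq_zero_of_lt (by omega), Nat.mul_zero, Nat.add_zero]
      have hsp : ∀ a ∈ range (M + 1),
          (a + p).choose (2 * p) * ((M + 1 - a) + q').choose (2 * q' + 1)
            = (a + p).choose (2 * p) * ((M - a) + q').choose (2 * q')
              + (a + p).choose (2 * p) * ((M - a) + q').choose (2 * q' + 1) := by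
        intro a ha
        rw [mem_range] at ha
        rw [show (M + 1 - a) + q' = ((M - a) + q') + 1 by omega,
          Nat.choose_succ_succ ((M - a) + q') (2 * q'), Nat.mul_add]
      rw [sum_congr rfl hsp, sum_add_distrib, (ih p q').1, (ih p q').2,
        show M + 1 + p + q' + 1 = (M + p + q' + 1) + 1 by omega,
        show 2 * p + 2 * q' + 2 = (2 * p + 2 * q' + 1) + 1 by ring,
        Nat.choose_succ_succ (M + p + q' + 1) (2 * p + 2 * q' + 1)]
    constructor
    · rcases q with _ | q'
      · calc ∑ a ∈ range (M + 1 + 1), (a + p).choose (2 * p) * ((M + 1 - a) + 0).choose (2 * 0)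
            = ∑ a ∈ range (M + 1 + 1), (a + p).choose (2 * p) := by
              refine sum_congr rfl fun a _ => ?_; simp
          _ = (M + 1 + p + 1).choose (2 * p + 1) := hockey (M + 1) p
          _ = (M + 1 + p + 0 + 1).choose (2 * p + 2 * 0 + 1) := by norm_num
      · rw [sum_range_succ,
          show ((M + 1 - (M + 1)) + (q' + 1)).choose (2 * (q' + 1)) = 0 from
            Nat.choose_eq_zero_of_lt (by omega), Nat.mul_zero, Nat.add_zero]
        have hsp : ∀ a ∈ range (M + 1),
            (a + p).choose (2 * p) * ((M + 1 - a) + (q' + 1)).choose (2 * (q' + 1))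
              = (a + p).choose (2 * p) * ((M + 1 - a) + q').choose (2 * q' + 1)
                + (a + p).choose (2 * p) * ((M - a) + (q' + 1)).choose (2 * (q' + 1)) := by
          intro a ha
          rw [mem_range] at ha
          rw [show (M + 1 - a) + (q' + 1) = ((M - a) + (q' + 1)) + 1 by omega,
            show 2 * (q' + 1) = (2 * q' + 1) + 1 by ring,
            Nat.choose_succ_succ ((M - a) + (q' + 1)) (2 * q' + 1), Nat.mul_add]
          congr 3
          omega
        rw [sum_congr rfl hsp, sum_add_distrib]
        have e1 : ∑ a ∈ range (M + 1),
            (a + p).choose (2 * p) * ((M + 1 - a) + q').choose (2 * q' + 1)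
            = (M + 1 + p + q' + 1).choose (2 * p + 2 * q' + 2) := by
          have h := h2 q'
          rw [sum_range_succ,
            show ((M + 1 - (M + 1)) + q').choose (2 * q' + 1) = 0 from
              Nat.choose_eq_zero_of_lt (by omega), Nat.mul_zero, Nat.add_zero] at h
          exact h
        rw [e1, (ih p (q' + 1)).1,
          show M + 1 + p + q' + 1 = M + p + q' + 2 by omega,
          show M + p + (q' + 1) + 1 = M + p + q' + 2 by omega,
          show 2 * p + 2 * (q' + 1) + 1 = (2 * p + 2 * q' + 2) + 1 by ring,
          show M + 1 + p + (q' + 1) + 1 = (M + p + q' + 2) + 1 by omega,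
          Nat.choose_succ_succ (M + p + q' + 2) (2 * p + 2 * q' + 2)]
    · exact h2 q

private lemma vand1 (M p q : ℕ) :
    ∑ a ∈ range (M + 1), (a + p).choose (2 * p) * ((M - a) + q).choose (2 * q)
      = (M + p + q + 1).choose (2 * p + 2 * q + 1) := (vand12 M p q).1

private lemma NAinnerSum (n j : ℕ) (hj : j ≤ n) :
    ∑ u ∈ range (n + 1), n.choose (u + 1) * (n.choose u * (u + 1).choose j)
      = n.choose j * ((2 * n - j).choose (n + 1 - j)) := by
  have hexp : (2 * n - j).choose (n + 1 - j)
      = ∑ a ∈ range (n + 1 - j + 1), (n - j).choose a * n.choose (n + 1 - j - a) := by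
    rw [show 2 * n - j = (n - j) + n by omega, Nat.add_choose_eq,
      Finset.Nat.sum_antidiagonal_eq_sum_range_succ (fun a b => (n - j).choose a * n.choose b)]
  rw [hexp, mul_sum]
  rcases j with _ | j'
  · -- j = 0
    rw [show n + 1 - 0 + 1 = (n + 1) + 1 by omega]
    rw [Finset.sum_range_succ' (fun a => Nat.choose n 0 * ((n - 0).choose a * n.choose (n + 1 - 0 - a))) (n + 1)]
    simp only [Nat.choose_zero_right, Nat.sub_zero, one_mul, Nat.choose_self, mul_one]
    rw [show n.choose (n + 1) = 0 from Nat.choose_eq_zero_of_lt (by omega), add_zero]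
    refine sum_congr rfl fun a ha => ?_
    rw [mem_range] at ha
    rw [show n + 1 - (a + 1) = n - a by omega, Nat.choose_symm (show a ≤ n by omega)]
  · -- j = j' + 1
    set j := j' + 1
    -- LHS : sum over u ∈ range (n+1); terms with u < j' vanish
    have hsplit : ∑ u ∈ range (n + 1), n.choose (u + 1) * (n.choose u * (u + 1).choose j)
        = ∑ u ∈ Ico j' (n + 1), n.choose (u + 1) * (n.choose u * (u + 1).choose j) := by
      rw [range_eq_Ico, ← Finset.sum_Ico_consecutive _ (Nat.zero_le j') (by omega)]
      have hz : ∑ u ∈ Ico 0 j', n.choose (u + 1) * (n.choose u * (u + 1).choose j) = 0 := by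
        refine sum_eq_zero fun u hu => ?_
        rw [mem_Ico] at hu
        rw [show (u + 1).choose j = 0 from Nat.choose_eq_zero_of_lt (by omega), mul_zero,
          mul_zero]
      rw [hz, zero_add]
    rw [hsplit, Finset.sum_Ico_eq_sum_range]
    rw [show n + 1 - j + 1 = n + 1 - j' by omega]
    refine sum_congr rfl fun w hw => ?_
    rw [mem_range] at hw
    -- u = j' + w
    by_cases hu : j' + w + 1 ≤ n
    · have htri : n.choose (j' + w + 1) * (j' + w + 1).choose j
          = n.choose j * (n - j).choose (j' + w + 1 - j) :=
        Nat.choose_mul (by omega)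
      have harg : j' + w + 1 - j = w := by omega
      have harg2 : n + 1 - j - w = n - (j' + w) := by omega
      rw [mul_comm (n.choose (j' + w)) ((j' + w + 1).choose j), ← mul_assoc, htri, harg,
        harg2, Nat.choose_symm (by omega)]
      ring
    · -- top overflow: both sides zero
      have h1 : n.choose (j' + w + 1) = 0 := Nat.choose_eq_zero_of_lt (by omega)
      have h2 : (n - j).choose w = 0 := Nat.choose_eq_zero_of_lt (by omega)
      rw [h1, h2]
      ring

private lemma prod_id (j r m : ℕ) (h : j + r = m + 1) :
    ((r + 1 : ℕ) : ℝ) * ((m + 1).choose j : ℝ) * ((j + 2 * r).choose (r + 1) : ℝ)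
      = ((m + 1 : ℕ) : ℝ) * ((2 * r).choose r : ℝ) * ((j + 2 * r).choose j : ℝ) := by
  have h1 : j ≤ m + 1 := by omega
  have h2 : r + 1 ≤ j + 2 * r := by omega
  have h3 : j ≤ j + 2 * r := by omega
  have h4 : r ≤ 2 * r := by omega
  rw [Nat.cast_choose ℝ h1, Nat.cast_choose ℝ h2, Nat.cast_choose ℝ h3, Nat.cast_choose ℝ h4]
  rw [show m + 1 - j = r by omega, show j + 2 * r - (r + 1) = m by omega,
    show 2 * r - r = r by omega, show j + 2 * r - j = 2 * r by omega]
  have hfact : ∀ k : ℕ, ((Nat.factorial k : ℕ) : ℝ) ≠ 0 :=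
    fun k => Nat.cast_ne_zero.2 (Nat.factorial_ne_zero k)
  field_simp
  rw [Nat.factorial_succ m, Nat.factorial_succ r]
  push_cast
  ring

noncomputable def NP (n : ℕ) (s : ℝ) : ℝ :=
  ∑ k ∈ Finset.range (n + 1), (catalan k : ℝ) * ((n + k).choose (2 * k) : ℝ) * s ^ (n - k)

private lemma NP_coeff_zero {n k : ℕ} (h : n < k) : ((n + k).choose (2 * k)) = 0 :=
  Nat.choose_eq_zero_of_lt (by omega)

private lemma NP_ext (m N : ℕ) (h : m ≤ N) (s : ℝ) :
    NP m s = ∑ k ∈ Finset.range (N + 1),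
      (catalan k : ℝ) * ((m + k).choose (2 * k) : ℝ) * s ^ (m - k) := by
  unfold NP
  refine sum_subset (by intro x hx; rw [mem_range] at *; omega) fun k hk hk2 => ?_
  rw [mem_range] at hk hk2
  rw [NP_coeff_zero (show m < k by omega)]
  norm_num

private lemma coeff_id (n j : ℕ) (hn : 1 ≤ n) (hj : j ≤ n) :
    (1 / (n : ℝ)) * ((n.choose j : ℕ) : ℝ) * (((2 * n - j).choose (n + 1 - j) : ℕ) : ℝ)
      = (catalan (n - j) : ℝ) * (((n + (n - j)).choose (2 * (n - j)) : ℕ) : ℝ) := by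
  set r := n - j with hr
  have h1 : j + r = (n - 1) + 1 := by omega
  have hp := prod_id j r (n - 1) h1
  have hcat : ((r + 1 : ℕ) : ℝ) * (catalan r : ℝ) = ((2 * r).choose r : ℝ) := by
    have := succ_mul_catalan_eq_centralBinom r
    have h2 : r.centralBinom = (2 * r).choose r := rfl
    rw [h2] at this
    exact_mod_cast congrArg (Nat.cast (R := ℝ)) this
  have e1 : 2 * n - j = j + 2 * r := by omega
  have e2 : n + 1 - j = r + 1 := by omega
  have e3 : n + r = j + 2 * r := by omega
  have e4 : (n - 1) + 1 = n := by omega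
  rw [e1, e2, show n + (n - j) = n + r from rfl, e3, show 2 * (n - j) = 2 * r from rfl]
  rw [e4] at hp
  have hchoose_symm : ((j + 2 * r).choose (2 * r) : ℝ) = ((j + 2 * r).choose j : ℝ) := by
    exact_mod_cast congrArg (Nat.cast (R := ℝ)) (Nat.choose_symm_add (a := j) (b := 2 * r)).symm
  rw [hchoose_symm]
  have hnne : (n : ℝ) ≠ 0 := by positivity
  have hrne : ((r : ℝ) + 1) ≠ 0 := by positivity
  have hcat' : (catalan r : ℝ) = ((2 * r).choose r : ℝ) / ((r : ℝ) + 1) := by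
    rw [eq_div_iff hrne]
    push_cast at hcat ⊢
    linarith [hcat]
  rw [hcat']
  push_cast at hp ⊢
  field_simp
  nlinarith [hp]

private lemma NA_eq_NP (n : ℕ) (t : ℝ) : NA n t = NP n (t - 1) := by
  rcases Nat.eq_zero_or_pos n with hn | hn
  · subst hn; simp [NA, NP]
  have hne : n ≠ 0 := by omega
  rw [NA, if_neg hne]
  -- Step 1: rewrite coefficients
  have step1 : ∀ m ∈ Icc 1 n,
      (1 / (m : ℝ)) * ((n - 1).choose (m - 1) : ℝ) * (n.choose (m - 1) : ℝ) * t ^ m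
        = (1 / (n : ℝ)) * ((n.choose m : ℝ) * (n.choose (m - 1) : ℝ)) * t ^ m := by
    intro m hm
    rw [mem_Icc] at hm
    have key : (n : ℕ) * (n - 1).choose (m - 1) = n.choose m * m := by
      have := Nat.add_one_mul_choose_eq (n - 1) (m - 1)
      rwa [show n - 1 + 1 = n by omega,
        show m - 1 + 1 = m by omega] at this
    have keyR : (n : ℝ) * ((n - 1).choose (m - 1) : ℝ) = (n.choose m : ℝ) * (m : ℝ) := by
      exact_mod_cast congrArg (Nat.cast (R := ℝ)) key
    have hmne : (m : ℝ) ≠ 0 := by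
      have : (0 : ℕ) < m := by omega
      positivity
    have hnne : (n : ℝ) ≠ 0 := by positivity
    field_simp
    linear_combination ((n.choose (m - 1) : ℝ) * t ^ m) * keyR
  rw [sum_congr rfl step1]
  -- Step 2: binomial expansion of t^m
  have step2 : ∀ m ∈ Icc 1 n,
      (1 / (n : ℝ)) * ((n.choose m : ℝ) * (n.choose (m - 1) : ℝ)) * t ^ m
        = ∑ j ∈ range (n + 1), (1 / (n : ℝ)) * ((n.choose m : ℝ) * (n.choose (m - 1) : ℝ))
            * ((m.choose j : ℝ) * (t - 1) ^ j) := by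
    intro m hm
    rw [mem_Icc] at hm
    have hpow : t ^ m = ∑ j ∈ range (n + 1), (t - 1) ^ j * ((m.choose j : ℕ) : ℝ) := by
      have h1 : ((t - 1) + 1) ^ m
          = ∑ j ∈ range (m + 1), (t - 1) ^ j * 1 ^ (m - j) * ((m.choose j : ℕ) : ℝ) :=
        add_pow (t - 1) 1 m
      simp only [one_pow, mul_one] at h1
      have h2 : t ^ m = ((t - 1) + 1) ^ m := by ring_nf
      rw [h2, h1]
      refine sum_subset (by intro x hx; rw [mem_range] at *; omega) fun j hj hj2 => ?_
      rw [mem_range] at hj hj2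
      rw [Nat.choose_eq_zero_of_lt (show m < j by omega)]
      norm_num
    rw [hpow, mul_sum]
    refine sum_congr rfl fun j _ => by ring
  rw [sum_congr rfl step2, sum_comm]
  -- Step 3: evaluate the inner sum over m
  have step3 : ∀ j ∈ range (n + 1),
      ∑ m ∈ Icc 1 n, (1 / (n : ℝ)) * ((n.choose m : ℝ) * (n.choose (m - 1) : ℝ))
          * ((m.choose j : ℝ) * (t - 1) ^ j)
        = (catalan (n - j) : ℝ) * (((n + (n - j)).choose (2 * (n - j)) : ℕ) : ℝ)
            * (t - 1) ^ j := by
    intro j hj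
    rw [mem_range] at hj
    have hsum : ∑ m ∈ Icc 1 n, (1 / (n : ℝ)) * ((n.choose m : ℝ) * (n.choose (m - 1) : ℝ))
          * ((m.choose j : ℝ) * (t - 1) ^ j)
        = (1 / (n : ℝ)) * ((∑ m ∈ Icc 1 n, n.choose m * (n.choose (m - 1) * m.choose j) : ℕ) : ℝ)
            * (t - 1) ^ j := by
      push_cast
      rw [mul_sum, sum_mul]
      refine sum_congr rfl fun m _ => by ring
    rw [hsum]
    have hnat : ∑ m ∈ Icc 1 n, n.choose m * (n.choose (m - 1) * m.choose j)
        = n.choose j * ((2 * n - j).choose (n + 1 - j)) := by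
      rw [← NAinnerSum n j (by omega)]
      rw [show Icc 1 n = Ico 1 (n + 1) by rfl, Finset.sum_Ico_eq_sum_range,
        show n + 1 - 1 = n by omega]
      rw [sum_range_succ, show n.choose (n + 1) = 0 from Nat.choose_eq_zero_of_lt (by omega)]
      simp only [Nat.zero_mul, Nat.mul_zero, Nat.add_zero, zero_mul, add_zero]
      refine (sum_congr rfl fun u hu => ?_).symm
      rw [show 1 + u = u + 1 by omega, show u + 1 - 1 = u by omega]
    rw [hnat]
    push_cast [← coeff_id n j hn (by omega)]
    ring
  rw [sum_congr rfl step3]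
  -- Step 4: reflect the sum
  have hrefl := Finset.sum_range_reflect
    (fun k => (catalan k : ℝ) * ((n + k).choose (2 * k) : ℝ) * (t - 1) ^ (n - k)) (n + 1)
  rw [NP, ← hrefl]
  refine sum_congr rfl fun j hj => ?_
  rw [mem_range] at hj
  rw [show n + 1 - 1 - j = n - j by omega, show n - (n - j) = j by omega]

private lemma sum_square_diag (N : ℕ) (F : ℕ → ℕ → ℝ) (hF : ∀ p q, N < p + q → F p q = 0) :
    ∑ p ∈ range (N + 1), ∑ q ∈ range (N + 1), F p q
      = ∑ r ∈ range (N + 1), ∑ p ∈ range (r + 1), F p (r - p) := by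
  have hL : ∀ p ∈ range (N + 1),
      ∑ q ∈ range (N + 1), F p q = ∑ q ∈ range (N + 1 - p), F p q := by
    intro p hp
    rw [mem_range] at hp
    refine (sum_subset (by intro x hx; rw [mem_range] at *; omega) fun q hq hq2 => ?_).symm
    rw [mem_range] at hq hq2
    exact hF p q (by omega)
  rw [sum_congr rfl hL, sum_sigma', sum_sigma']
  refine sum_nbij' (fun x => ⟨x.1 + x.2, x.1⟩) (fun x => ⟨x.2, x.1 - x.2⟩) ?_ ?_ ?_ ?_ ?_
  · intro a ha
    simp only [mem_sigma, mem_range] at ha ⊢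
    omega
  · intro a ha
    simp only [mem_sigma, mem_range] at ha ⊢
    omega
  · rintro ⟨p, q⟩ ha
    simp only [mem_sigma, mem_range] at ha
    simp only [Nat.add_sub_cancel_left]
  · rintro ⟨r, p⟩ ha
    simp only [mem_sigma, mem_range] at ha
    simp only [show p + (r - p) = r from by omega]
  · rintro ⟨p, q⟩ ha
    simp only [mem_sigma, mem_range] at ha
    simp only [Nat.add_sub_cancel_left]

private lemma NP_split (n : ℕ) (s : ℝ) :
    NP (n + 1) s = s * NP n s
      + ∑ r ∈ range (n + 1), (catalan (r + 1) : ℝ) * ((n + r + 1).choose (2 * r + 1) : ℝ)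
          * s ^ (n - r) := by
  have hsP : s * NP n s
      = ∑ k ∈ range (n + 1), (catalan k : ℝ) * ((n + k).choose (2 * k) : ℝ) * s ^ (n + 1 - k) := by
    rw [NP, mul_sum]
    refine sum_congr rfl fun k hk => ?_
    rw [mem_range] at hk
    rw [show n + 1 - k = (n - k) + 1 by omega, pow_succ]
    ring
  rw [hsP, NP]
  rw [Finset.sum_range_succ' (fun k => (catalan k : ℝ) * ((n + 1 + k).choose (2 * k) : ℝ)
    * s ^ (n + 1 - k)) (n + 1)]
  simp only [Nat.choose_zero_right, Nat.cast_one, catalan_zero, one_mul, mul_one, Nat.sub_zero,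
    Nat.mul_zero, Nat.add_zero]
  -- LHS: ∑_{k∈range(n+1)} cat (k+1) C(n+k+2, 2k+2) s^{n-k}  + s^{n+1}
  -- RHS: ∑ cat k C(n+k,2k) s^{n+1-k} + ∑ cat (r+1) C(n+r+1, 2r+1) s^{n-r}
  have hfirst : ∑ k ∈ range (n + 1), (catalan k : ℝ) * ((n + k).choose (2 * k) : ℝ)
        * s ^ (n + 1 - k)
      = ∑ k ∈ range (n + 1), (catalan (k + 1) : ℝ) * ((n + k + 1).choose (2 * k + 2) : ℝ)
        * s ^ (n - k) + s ^ (n + 1) := by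
    rw [Finset.sum_range_succ' (fun k => (catalan k : ℝ) * ((n + k).choose (2 * k) : ℝ)
      * s ^ (n + 1 - k)) n]
    simp only [Nat.choose_zero_right, Nat.cast_one, catalan_zero, one_mul, mul_one, Nat.sub_zero,
      Nat.mul_zero, Nat.add_zero]
    congr 1
    rw [sum_range_succ, show (n + n + 1).choose (2 * n + 2) = 0 from
      Nat.choose_eq_zero_of_lt (by omega)]
    push_cast
    rw [mul_zero, zero_mul, add_zero]
    refine sum_congr rfl fun k hk => ?_
    rw [mem_range] at hk
    simp only [show n + (k + 1) = n + k + 1 from by omega,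
      show 2 * (k + 1) = 2 * k + 2 from by ring, show n + 1 - (k + 1) = n - k from by omega]
  rw [hfirst]
  have hmerge : ∀ k ∈ range (n + 1),
      (catalan (k + 1) : ℝ) * ((n + 1 + (k + 1)).choose (2 * (k + 1)) : ℝ) * s ^ (n + 1 - (k + 1))
        = (catalan (k + 1) : ℝ) * ((n + k + 1).choose (2 * k + 2) : ℝ) * s ^ (n - k)
          + (catalan (k + 1) : ℝ) * ((n + k + 1).choose (2 * k + 1) : ℝ) * s ^ (n - k) := by
    intro k hk
    simp only [show n + 1 + (k + 1) = (n + k + 1) + 1 from by omega,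
      show 2 * (k + 1) = (2 * k + 1) + 1 from by ring,
      Nat.choose_succ_succ (n + k + 1) (2 * k + 1),
      show n + 1 - (k + 1) = n - k from by omega]
    push_cast
    ring
  rw [sum_congr rfl hmerge, sum_add_distrib]
  ring

private lemma NP_rec (n : ℕ) (s : ℝ) :
    NP (n + 1) s = (1 + s) * NP n s + ∑ k ∈ Icc 1 n, NP (k - 1) s * NP (n + 1 - k) s := by
  have hprod : ∀ k ∈ Icc 1 n, NP (k - 1) s * NP (n + 1 - k) s
      = ∑ p ∈ range (n + 1), ∑ q ∈ range (n + 1),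
          ((catalan p : ℝ) * (catalan q : ℝ))
            * ((((k - 1) + p).choose (2 * p) * (((n + 1 - k) + q).choose (2 * q)) : ℕ) : ℝ)
            * s ^ (n - p - q) := by
    intro k hk
    rw [mem_Icc] at hk
    rw [NP_ext (k - 1) n (by omega) s, NP_ext (n + 1 - k) n (by omega) s, sum_mul_sum]
    refine sum_congr rfl fun p hp => sum_congr rfl fun q hq => ?_
    rw [mem_range] at hp hq
    by_cases h1 : p ≤ k - 1
    · by_cases h2 : q ≤ n + 1 - k
      · push_cast
        rw [show n - p - q = (k - 1 - p) + ((n + 1 - k) - q) from by omega, pow_add]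
        ring
      · rw [show ((n + 1 - k) + q).choose (2 * q) = 0 from Nat.choose_eq_zero_of_lt (by omega)]
        push_cast
        ring
    · rw [show ((k - 1) + p).choose (2 * p) = 0 from Nat.choose_eq_zero_of_lt (by omega)]
      push_cast
      ring
  rw [sum_congr rfl hprod, Finset.sum_comm]
  have hswap : ∀ p ∈ range (n + 1),
      ∑ k ∈ Icc 1 n, ∑ q ∈ range (n + 1),
          ((catalan p : ℝ) * (catalan q : ℝ))
            * ((((k - 1) + p).choose (2 * p) * (((n + 1 - k) + q).choose (2 * q)) : ℕ) : ℝ)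
            * s ^ (n - p - q)
        = ∑ q ∈ range (n + 1), ∑ k ∈ Icc 1 n,
          ((catalan p : ℝ) * (catalan q : ℝ))
            * ((((k - 1) + p).choose (2 * p) * (((n + 1 - k) + q).choose (2 * q)) : ℕ) : ℝ)
            * s ^ (n - p - q) := fun p _ => Finset.sum_comm
  rw [sum_congr rfl hswap]
  have hksum : ∀ p ∈ range (n + 1), ∀ q ∈ range (n + 1),
      ∑ k ∈ Icc 1 n,
          ((catalan p : ℝ) * (catalan q : ℝ))
            * ((((k - 1) + p).choose (2 * p) * (((n + 1 - k) + q).choose (2 * q)) : ℕ) : ℝ)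
            * s ^ (n - p - q)
        = ((catalan p : ℝ) * (catalan q : ℝ))
            * (((n + p + q + 1).choose (2 * p + 2 * q + 1) : ℕ) : ℝ) * s ^ (n - p - q)
          - ((catalan p : ℝ) * (catalan q : ℝ))
            * (((n + p).choose (2 * p) * (q.choose (2 * q)) : ℕ) : ℝ) * s ^ (n - p - q) := by
    intro p hp q hq
    have hnat : (∑ k ∈ Icc 1 n, ((k - 1) + p).choose (2 * p) * (((n + 1 - k) + q).choose (2 * q)))
        + (n + p).choose (2 * p) * q.choose (2 * q)
        = (n + p + q + 1).choose (2 * p + 2 * q + 1) := by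
      have hv := vand1 n p q
      rw [sum_range_succ, Nat.sub_self, Nat.zero_add] at hv
      rw [← hv]
      congr 1
      rw [show Icc 1 n = Ico 1 (n + 1) from rfl, Finset.sum_Ico_eq_sum_range,
        show n + 1 - 1 = n from rfl]
      refine sum_congr rfl fun a ha => ?_
      rw [mem_range] at ha
      rw [show 1 + a - 1 = a from by omega, show n + 1 - (1 + a) = n - a from by omega]
    have hfact : ∑ k ∈ Icc 1 n,
          ((catalan p : ℝ) * (catalan q : ℝ))
            * ((((k - 1) + p).choose (2 * p) * (((n + 1 - k) + q).choose (2 * q)) : ℕ) : ℝ)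
            * s ^ (n - p - q)
        = ((catalan p : ℝ) * (catalan q : ℝ))
            * ((∑ k ∈ Icc 1 n,
                ((k - 1) + p).choose (2 * p) * (((n + 1 - k) + q).choose (2 * q)) : ℕ) : ℝ)
            * s ^ (n - p - q) := by
      rw [Nat.cast_sum, mul_sum, sum_mul]
    rw [hfact]
    have hcast := congrArg (Nat.cast (R := ℝ)) hnat
    push_cast at hcast
    push_cast
    linear_combination s ^ (n - p - q) * ((catalan p : ℝ) * (catalan q : ℝ)) * hcast
  rw [sum_congr rfl fun p hp => sum_congr rfl (hksum p hp)]
  simp only [sum_sub_distrib]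
  -- second piece = NP n s
  have hsecond : ∑ p ∈ range (n + 1), ∑ q ∈ range (n + 1),
      ((catalan p : ℝ) * (catalan q : ℝ))
        * (((n + p).choose (2 * p) * (q.choose (2 * q)) : ℕ) : ℝ) * s ^ (n - p - q)
      = NP n s := by
    have hinner : ∀ p ∈ range (n + 1), ∑ q ∈ range (n + 1),
        ((catalan p : ℝ) * (catalan q : ℝ))
          * (((n + p).choose (2 * p) * (q.choose (2 * q)) : ℕ) : ℝ) * s ^ (n - p - q)
        = (catalan p : ℝ) * ((n + p).choose (2 * p) : ℝ) * s ^ (n - p) := by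
      intro p hp
      rw [Finset.sum_eq_single 0]
      · simp
      · intro q hq hq0
        rw [show q.choose (2 * q) = 0 from Nat.choose_eq_zero_of_lt (by omega)]
        push_cast
        ring
      · intro h
        exact absurd (mem_range.2 (by omega)) h
    rw [sum_congr rfl hinner, NP]
  rw [hsecond]
  -- first piece via diagonal collection
  have hfirst : ∑ p ∈ range (n + 1), ∑ q ∈ range (n + 1),
      ((catalan p : ℝ) * (catalan q : ℝ))
        * (((n + p + q + 1).choose (2 * p + 2 * q + 1) : ℕ) : ℝ) * s ^ (n - p - q)
      = ∑ r ∈ range (n + 1), (catalan (r + 1) : ℝ) * ((n + r + 1).choose (2 * r + 1) : ℝ)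
          * s ^ (n - r) := by
    have hF0 : ∀ p q : ℕ, n < p + q →
        ((catalan p : ℝ) * (catalan q : ℝ))
          * (((n + p + q + 1).choose (2 * p + 2 * q + 1) : ℕ) : ℝ) * s ^ (n - p - q) = 0 := by
      intro p q hpq
      rw [show (n + p + q + 1).choose (2 * p + 2 * q + 1) = 0 from
        Nat.choose_eq_zero_of_lt (by omega)]
      push_cast
      ring
    rw [sum_square_diag n (fun p q => ((catalan p : ℝ) * (catalan q : ℝ))
        * (((n + p + q + 1).choose (2 * p + 2 * q + 1) : ℕ) : ℝ) * s ^ (n - p - q)) hF0]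
    refine sum_congr rfl fun r hr => ?_
    rw [mem_range] at hr
    have hterm : ∀ p ∈ range (r + 1),
        ((catalan p : ℝ) * (catalan (r - p) : ℝ))
          * (((n + p + (r - p) + 1).choose (2 * p + 2 * (r - p) + 1) : ℕ) : ℝ)
          * s ^ (n - p - (r - p))
        = ((catalan p : ℝ) * (catalan (r - p) : ℝ))
          * (((n + r + 1).choose (2 * r + 1) : ℕ) : ℝ) * s ^ (n - r) := by
      intro p hp
      rw [mem_range] at hp
      rw [show n + p + (r - p) + 1 = n + r + 1 from by omega,
        show 2 * p + 2 * (r - p) + 1 = 2 * r + 1 from by omega,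
        show n - p - (r - p) = n - r from by omega]
    rw [sum_congr rfl hterm]
    have hcat : (catalan (r + 1) : ℝ)
        = ∑ p ∈ range (r + 1), (catalan p : ℝ) * (catalan (r - p) : ℝ) := by
      have h := catalan_succ' r
      rw [Finset.Nat.sum_antidiagonal_eq_sum_range_succ
        (fun a b => catalan a * catalan b) r] at h
      exact_mod_cast congrArg (Nat.cast (R := ℝ)) h
    rw [hcat, sum_mul, sum_mul]
  rw [hfirst, NP_split n s]
  ring

theorem stmt4 (n : ℕ) (hn : 1 ≤ n) (t : ℝ) :
    NA n t = t * NA (n - 1) t + ∑ k ∈ Finset.Icc 1 (n - 1), NA (k - 1) t * NA (n - k) t := by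
  obtain ⟨m, rfl⟩ : ∃ m, n = m + 1 := ⟨n - 1, by omega⟩
  simp only [NA_eq_NP, Nat.add_sub_cancel]
  have h := NP_rec m (t - 1)
  rw [show (1 : ℝ) + (t - 1) = t from by ring] at h
  exact h
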